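/- arXiv:2411.18550 — 2 statements merged into one kernel-verified Lean document; each statement's English description precedes it below -/
import Mathlib

section
/- Let α > −1 and κ < √2 be real. With j and D as in the Szegő-function construction, define ν(z) := ( (z − √2)/(z − κ) )^{1/4} on ℂ \ [κ, √2] with the principal branch (so ν(z) → 1 as z → +∞), let χ := ( (√2 − κ)/4 )^{α/2}, and define the 2 × 2 matrix P(z) := diag(χ, χ^{−1}) · (1/2)·[[ν(z) + ν(z)^{−1}, −i(ν(z) − ν(z)^{−1})], [i(ν(z) − ν(z)^{−1}), ν(z) + ν(z)^{−1}]] · diag(D(z)^{−1}, D(z)) for z ∈ ℂ \ [κ, √2]. Then for every z ∈ (κ, √2) the one-sided limits P₊(z) := lim_{ε↓0} P(z + iε) and P₋(z) := lim_{ε↓0} P(z − iε) exist (entrywise) and satisfy the jump relation P₊(z) = P₋(z) · [[0, (√2 − z)^α], [−(√2 − z)^{−α}, 0]]. -/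
open Filter Topology Set

/-- The conformal map `j(w) = w + (w² - 1)^{1/2}` from `ℂ \ [-1, 1]` to the exterior
of the unit disk, with the branch of the square root (cut on `[-1, 1]`, realized as
`(w-1)^{1/2}(w+1)^{1/2}` with principal branches) for which `j(w) > 1` for real
`w > 1`. -/
noncomputable def jmap (w : ℂ) : ℂ :=
  w + (w - 1) ^ ((1 : ℂ) / 2) * (w + 1) ^ ((1 : ℂ) / 2)

/-- The Szegő function
`D(z) = ((z - √2)/j(1 + 2(z - √2)/(√2 - κ)))^{α/2}`, with the principal branch of
the power. -/
noncomputable def szego (α κ : ℝ) (z : ℂ) : ℂ :=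
  ((z - (Real.sqrt 2 : ℂ)) /
      jmap (1 + 2 * (z - (Real.sqrt 2 : ℂ)) / ((Real.sqrt 2 : ℂ) - (κ : ℂ))))
    ^ ((α : ℂ) / 2)

/-- The fourth root `ν(z) = ((z - √2)/(z - κ))^{1/4}`, with the principal branch
(so that `ν(z) → 1` as `z → +∞`). -/
noncomputable def nu (κ : ℝ) (z : ℂ) : ℂ :=
  ((z - (Real.sqrt 2 : ℂ)) / (z - (κ : ℂ))) ^ ((1 : ℂ) / 4)

/-- The constant `χ = ((√2 - κ)/4)^{α/2}`. -/
noncomputable def chi (α κ : ℝ) : ℝ := ((Real.sqrt 2 - κ) / 4) ^ (α / 2)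

/-- The outer parametrix
`P(z) = diag(χ, χ⁻¹) · (1/2)[[ν + ν⁻¹, -i(ν - ν⁻¹)], [i(ν - ν⁻¹), ν + ν⁻¹]]
  · diag(D(z)⁻¹, D(z))`. -/
noncomputable def Pmat (α κ : ℝ) (z : ℂ) : Matrix (Fin 2) (Fin 2) ℂ :=
  !![((chi α κ : ℝ) : ℂ), 0; 0, (((chi α κ : ℝ) : ℂ))⁻¹] *
    ((1 / 2 : ℂ) •
      !![nu κ z + (nu κ z)⁻¹, -Complex.I * (nu κ z - (nu κ z)⁻¹);
         Complex.I * (nu κ z - (nu κ z)⁻¹), nu κ z + (nu κ z)⁻¹]) *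
    !![(szego α κ z)⁻¹, 0; 0, szego α κ z]

/- ------------------  auxiliary material  ------------------ -/

/-- Abstract form of the outer parametrix. -/
noncomputable def Pform (c ν D : ℂ) : Matrix (Fin 2) (Fin 2) ℂ :=
  !![c, 0; 0, c⁻¹] *
    ((1 / 2 : ℂ) •
      !![ν + ν⁻¹, -Complex.I * (ν - ν⁻¹); Complex.I * (ν - ν⁻¹), ν + ν⁻¹]) *
    !![D⁻¹, 0; 0, D]

lemma Pmat_eq (α κ : ℝ) (z : ℂ) :
    Pmat α κ z = Pform ((chi α κ : ℝ) : ℂ) (nu κ z) (szego α κ z) := rfl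

lemma Pform_eq (c ν D : ℂ) :
    Pform c ν D =
      !![c * ((ν + ν⁻¹) / 2) * D⁻¹, c * (-Complex.I * (ν - ν⁻¹) / 2) * D;
         c⁻¹ * (Complex.I * (ν - ν⁻¹) / 2) * D⁻¹, c⁻¹ * ((ν + ν⁻¹) / 2) * D] := by
  ext i j
  fin_cases i <;> fin_cases j <;>
    simp only [Pform, Matrix.mul_apply, Fin.sum_univ_two, Matrix.smul_apply, smul_eq_mul,
      Matrix.of_apply, Matrix.cons_val', Matrix.cons_val_zero, Matrix.cons_val_one,
      Matrix.head_cons, Matrix.empty_val', Matrix.cons_val_fin_one, Matrix.head_fin_const,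
      Fin.zero_eta, Fin.mk_one, Fin.isValue] <;>
    ring

lemma Pform_tendsto {l : Filter ℝ} {f g : ℝ → ℂ} {c A B : ℂ}
    (hf : Tendsto f l (𝓝 A)) (hg : Tendsto g l (𝓝 B)) (hA : A ≠ 0) (hB : B ≠ 0) :
    ∀ i j : Fin 2, Tendsto (fun ε => Pform c (f ε) (g ε) i j) l (𝓝 (Pform c A B i j)) := by
  have hf' : Tendsto (fun ε => (f ε)⁻¹) l (𝓝 A⁻¹) := hf.inv₀ hA
  have hg' : Tendsto (fun ε => (g ε)⁻¹) l (𝓝 B⁻¹) := hg.inv₀ hB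
  intro i j
  fin_cases i <;> fin_cases j <;>
    simp only [Pform_eq, Matrix.of_apply, Matrix.cons_val', Matrix.cons_val_zero,
      Matrix.cons_val_one, Matrix.head_cons, Matrix.empty_val', Matrix.cons_val_fin_one,
      Matrix.head_fin_const, Fin.zero_eta, Fin.mk_one, Fin.isValue] <;>
    first
      | exact (((hf.add hf').div_const 2).const_mul c).mul hg'
      | exact ((((hf.sub hf').const_mul (-Complex.I)).div_const 2).const_mul c).mul hg
      | exact ((((hf.sub hf').const_mul Complex.I).div_const 2).const_mul c⁻¹).mul hg'
      | exact (((hf.add hf').div_const 2).const_mul c⁻¹).mul hg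

lemma Pform_jump (c ν D ρ : ℂ) (hν : ν ≠ 0) (hD : D ≠ 0) (hρ : ρ ≠ 0) :
    Pform c (Complex.I * ν) (ρ * D⁻¹) = Pform c ν D * !![0, ρ; -ρ⁻¹, 0] := by
  have key1 : Complex.I * ν + (Complex.I * ν)⁻¹ = Complex.I * (ν - ν⁻¹) := by
    rw [mul_inv, Complex.inv_I]; ring
  have key2 : Complex.I * ν - (Complex.I * ν)⁻¹ = Complex.I * (ν + ν⁻¹) := by
    rw [mul_inv, Complex.inv_I]; ring
  have key3 : -Complex.I * (Complex.I * (ν + ν⁻¹)) = ν + ν⁻¹ := by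
    rw [← mul_assoc, neg_mul, Complex.I_mul_I]; ring
  have key4 : Complex.I * (Complex.I * (ν + ν⁻¹)) = -(ν + ν⁻¹) := by
    rw [← mul_assoc, Complex.I_mul_I]; ring
  have hρD : (ρ * D⁻¹)⁻¹ = ρ⁻¹ * D := by rw [mul_inv, inv_inv]
  rw [Pform_eq, Pform_eq, Matrix.mul_fin_two]
  simp only [key1, key2, key3, key4, hρD]
  ext i j
  fin_cases i <;> fin_cases j <;>
    simp only [Matrix.of_apply, Matrix.cons_val', Matrix.cons_val_zero, Matrix.cons_val_one,
      Matrix.head_cons, Matrix.empty_val', Matrix.cons_val_fin_one, Matrix.head_fin_const,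
      Fin.zero_eta, Fin.mk_one, Fin.isValue] <;>
    ring

lemma exp_pi_div_two_mul_I : Complex.exp ((Real.pi / 2 : ℝ) * Complex.I) = Complex.I := by
  rw [Complex.exp_mul_I, ← Complex.ofReal_cos, ← Complex.ofReal_sin,
    Real.cos_pi_div_two, Real.sin_pi_div_two]
  simp

lemma exp_half_log_pos (x : ℝ) (hx : 0 < x) :
    Complex.exp (((1 : ℂ) / 2) * ((Real.log x : ℝ) + (Real.pi : ℝ) * Complex.I)) =
      Complex.I * (Real.sqrt x : ℝ) := by
  have h1 : ((1 : ℂ) / 2) * ((Real.log x : ℝ) + (Real.pi : ℝ) * Complex.I) =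
      ((Real.log x / 2 : ℝ) : ℂ) + ((Real.pi / 2 : ℝ) : ℂ) * Complex.I := by
    push_cast; ring
  rw [h1, Complex.exp_add, exp_pi_div_two_mul_I, ← Complex.ofReal_exp]
  rw [← Real.log_sqrt hx.le, Real.exp_log (Real.sqrt_pos.2 hx)]
  ring

/-- Boundary values of the principal branch of a complex power, approaching the
negative real axis from the upper half-plane. -/
lemma tendsto_cpow_upper {u : ℝ → ℂ} {x : ℝ} (hx : x < 0)
    (hu : Tendsto u (𝓝[>] (0 : ℝ)) (𝓝 (x : ℂ)))
    (him : ∀ᶠ ε in 𝓝[>] (0 : ℝ), 0 < (u ε).im) (c : ℂ) :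
    Tendsto (fun ε => u ε ^ c) (𝓝[>] (0 : ℝ))
      (𝓝 (Complex.exp (c * ((Real.log (-x) : ℝ) + (Real.pi : ℝ) * Complex.I)))) := by
  have hne : ∀ᶠ ε in 𝓝[>] (0 : ℝ), u ε ≠ 0 :=
    him.mono fun ε h hz => by simp [hz] at h
  have hmem : Tendsto u (𝓝[>] (0 : ℝ)) (𝓝[{z : ℂ | 0 ≤ z.im}] (x : ℂ)) :=
    tendsto_nhdsWithin_iff.mpr ⟨hu, him.mono fun ε h => le_of_lt h⟩
  have hlog : Tendsto (fun ε => Complex.log (u ε)) (𝓝[>] (0 : ℝ))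
      (𝓝 ((Real.log (-x) : ℝ) + (Real.pi : ℝ) * Complex.I)) := by
    have h := (Complex.tendsto_log_nhdsWithin_im_nonneg_of_re_neg_of_im_zero
      (z := (x : ℂ)) (by simpa using hx) (by simp)).comp hmem
    simpa [Complex.norm_real, Function.comp_def, abs_of_neg hx] using h
  have hexp : Tendsto (fun ε => Complex.exp (Complex.log (u ε) * c)) (𝓝[>] (0 : ℝ))
      (𝓝 (Complex.exp (((Real.log (-x) : ℝ) + (Real.pi : ℝ) * Complex.I) * c))) :=
    (Complex.continuous_exp.tendsto _).comp (hlog.mul_const c)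
  rw [show c * ((Real.log (-x) : ℝ) + (Real.pi : ℝ) * Complex.I) =
      ((Real.log (-x) : ℝ) + (Real.pi : ℝ) * Complex.I) * c from mul_comm _ _]
  exact hexp.congr' (hne.mono fun ε h => (Complex.cpow_def_of_ne_zero h c).symm)

lemma conj_cpow_real {X : ℂ} (h : X.im ≠ 0) (c : ℂ) (hc : (starRingEnd ℂ) c = c) :
    (starRingEnd ℂ) X ^ c = (starRingEnd ℂ) (X ^ c) := by
  have harg : X.arg ≠ Real.pi := fun hπ => h (Complex.arg_eq_pi_iff.1 hπ).2
  rw [Complex.conj_cpow X c harg, hc]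

lemma jmap_conj {W : ℂ} (h : 0 < W.im) : jmap ((starRingEnd ℂ) W) = (starRingEnd ℂ) (jmap W) := by
  have h1 : (W - 1).im ≠ 0 := by simpa using h.ne'
  have h2 : (W + 1).im ≠ 0 := by simpa using h.ne'
  have hc : (starRingEnd ℂ) ((1 : ℂ) / 2) = (1 : ℂ) / 2 := by
    rw [map_div₀, map_one, map_ofNat]
  simp only [jmap, map_add, map_mul]
  congr 1
  congr 1
  · rw [show (starRingEnd ℂ) W - 1 = (starRingEnd ℂ) (W - 1) by rw [map_sub, map_one],
      conj_cpow_real h1 _ hc]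
  · rw [show (starRingEnd ℂ) W + 1 = (starRingEnd ℂ) (W + 1) by rw [map_add, map_one],
      conj_cpow_real h2 _ hc]

lemma tendsto_sqrt_upper {v : ℝ → ℂ} {x : ℝ} (hx : x < 0)
    (hv : Tendsto v (𝓝[>] (0 : ℝ)) (𝓝 (x : ℂ)))
    (him : ∀ᶠ ε in 𝓝[>] (0 : ℝ), 0 < (v ε).im) :
    Tendsto (fun ε => v ε ^ ((1 : ℂ) / 2)) (𝓝[>] (0 : ℝ))
      (𝓝 (Complex.I * ((Real.sqrt (-x) : ℝ) : ℂ))) := by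
  have h := tendsto_cpow_upper hx hv him ((1 : ℂ) / 2)
  rwa [exp_half_log_pos (-x) (by linarith)] at h

/-- Jump relation of the outer parametrix on `(κ, √2)`: the one-sided entrywise
limits `P₊(z)` and `P₋(z)` exist and satisfy
`P₊(z) = P₋(z) · [[0, (√2 - z)^α], [-(√2 - z)^{-α}, 0]]`. -/
theorem outer_parametrix_jump (α κ : ℝ) (hα : -1 < α) (hκ : κ < Real.sqrt 2) :
    ∀ z : ℝ, z ∈ Ioo κ (Real.sqrt 2) →
      ∃ Pp Pm : Matrix (Fin 2) (Fin 2) ℂ,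
        (∀ i j : Fin 2,
          Tendsto (fun ε : ℝ => Pmat α κ ((z : ℂ) + (ε : ℂ) * Complex.I) i j)
            (𝓝[>] 0) (𝓝 (Pp i j))) ∧
        (∀ i j : Fin 2,
          Tendsto (fun ε : ℝ => Pmat α κ ((z : ℂ) - (ε : ℂ) * Complex.I) i j)
            (𝓝[>] 0) (𝓝 (Pm i j))) ∧
        Pp = Pm *
          !![0, (((Real.sqrt 2 - z) ^ α : ℝ) : ℂ);
             -(((Real.sqrt 2 - z) ^ (-α) : ℝ) : ℂ), 0] := by
  intro z hz
  obtain ⟨hz1, hz2⟩ := hz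
  have hbpos : 0 < z - κ := sub_pos.2 hz1
  have hcpos : 0 < Real.sqrt 2 - κ := sub_pos.2 hκ
  set r : ℝ := Real.sqrt 2 - z with hrdef
  have hr : 0 < r := sub_pos.2 hz2
  set w : ℝ := 1 - 2 * r / (Real.sqrt 2 - κ) with hwdef
  have hw2 : w < 1 := by
    rw [hwdef]
    have : 0 < 2 * r / (Real.sqrt 2 - κ) := by positivity
    linarith
  have hw1 : -1 < w := by
    rw [hwdef]
    have hlt : 2 * r / (Real.sqrt 2 - κ) < 2 := by
      rw [div_lt_iff₀ hcpos]
      have : r < Real.sqrt 2 - κ := by rw [hrdef]; linarith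
      linarith
    linarith
  set s1 : ℝ := Real.sqrt (1 - w) with hs1def
  set s2 : ℝ := Real.sqrt (w + 1) with hs2def
  have hs1 : 0 < s1 := Real.sqrt_pos.2 (by linarith)
  have hs2 : 0 < s2 := Real.sqrt_pos.2 (by linarith)
  have hs1sq : s1 ^ 2 = 1 - w := Real.sq_sqrt (by linarith)
  have hs2sq : s2 ^ 2 = w + 1 := Real.sq_sqrt (by linarith)
  have hden0 : ((z : ℂ) - (κ : ℂ)) ≠ 0 := sub_ne_zero.2 (by exact_mod_cast hz1.ne')
  have hC0 : ((Real.sqrt 2 : ℂ) - (κ : ℂ)) ≠ 0 := sub_ne_zero.2 (by exact_mod_cast hκ.ne')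
  have hε0 : Tendsto (fun ε : ℝ => ((ε : ℂ))) (𝓝[>] (0 : ℝ)) (𝓝 0) := by
    have h : Tendsto (fun ε : ℝ => ((ε : ℂ))) (𝓝 (0 : ℝ)) (𝓝 (((0 : ℝ) : ℂ))) :=
      Complex.continuous_ofReal.tendsto 0
    simpa using h.mono_left (nhdsWithin_le_nhds : 𝓝[>] (0 : ℝ) ≤ 𝓝 0)
  have hev : ∀ᶠ ε in 𝓝[>] (0 : ℝ), 0 < ε := eventually_mem_nhdsWithin
  -- the upper path numerator
  have hnum : Tendsto (fun ε : ℝ => (z : ℂ) + (ε : ℂ) * Complex.I - (Real.sqrt 2 : ℂ))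
      (𝓝[>] (0 : ℝ)) (𝓝 ((z : ℂ) - (Real.sqrt 2 : ℂ))) := by
    have h : Tendsto (fun ε : ℝ => (z : ℂ) + (ε : ℂ) * Complex.I) (𝓝[>] (0 : ℝ))
        (𝓝 ((z : ℂ) + 0 * Complex.I)) := tendsto_const_nhds.add (hε0.mul_const Complex.I)
    simpa using h.sub (tendsto_const_nhds (x := ((Real.sqrt 2 : ℂ))))
  have hden : Tendsto (fun ε : ℝ => (z : ℂ) + (ε : ℂ) * Complex.I - (κ : ℂ))
      (𝓝[>] (0 : ℝ)) (𝓝 ((z : ℂ) - (κ : ℂ))) := by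
    have h : Tendsto (fun ε : ℝ => (z : ℂ) + (ε : ℂ) * Complex.I) (𝓝[>] (0 : ℝ))
        (𝓝 ((z : ℂ) + 0 * Complex.I)) := tendsto_const_nhds.add (hε0.mul_const Complex.I)
    simpa using h.sub (tendsto_const_nhds (x := ((κ : ℂ))))
  -- ν: base limit and imaginary part
  have hxcast : (((-(r / (z - κ)) : ℝ)) : ℂ) =
      ((z : ℂ) - (Real.sqrt 2 : ℂ)) / ((z : ℂ) - (κ : ℂ)) := by
    rw [hrdef]
    push_cast
    field_simp
    try ring
  have hx : -(r / (z - κ)) < 0 := neg_lt_zero.2 (div_pos hr hbpos)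
  have hu_lim : Tendsto
      (fun ε : ℝ => ((z : ℂ) + (ε : ℂ) * Complex.I - (Real.sqrt 2 : ℂ)) /
        ((z : ℂ) + (ε : ℂ) * Complex.I - (κ : ℂ)))
      (𝓝[>] (0 : ℝ)) (𝓝 (((-(r / (z - κ)) : ℝ)) : ℂ)) := by
    rw [hxcast]; exact hnum.div hden hden0
  have huim : ∀ ε : ℝ, 0 < ε →
      0 < (((z : ℂ) + (ε : ℂ) * Complex.I - (Real.sqrt 2 : ℂ)) /
        ((z : ℂ) + (ε : ℂ) * Complex.I - (κ : ℂ))).im := by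
    intro ε hε
    have h3 : ((z : ℂ) + (ε : ℂ) * Complex.I - (κ : ℂ)).im = ε := by simp
    have hde : ((z : ℂ) + (ε : ℂ) * Complex.I - (κ : ℂ)) ≠ 0 := by
      intro h
      rw [h] at h3
      simp at h3
      exact hε.ne' h3.symm
    have hnsq : 0 < Complex.normSq ((z : ℂ) + (ε : ℂ) * Complex.I - (κ : ℂ)) :=
      Complex.normSq_pos.2 hde
    rw [Complex.div_im]
    have h1 : ((z : ℂ) + (ε : ℂ) * Complex.I - (Real.sqrt 2 : ℂ)).im = ε := by simp
    have h2 : ((z : ℂ) + (ε : ℂ) * Complex.I - (Real.sqrt 2 : ℂ)).re = z - Real.sqrt 2 := by simp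
    have h4 : ((z : ℂ) + (ε : ℂ) * Complex.I - (κ : ℂ)).re = z - κ := by simp
    rw [h1, h2, h3, h4]
    have heq : ε * (z - κ) / Complex.normSq ((z : ℂ) + (ε : ℂ) * Complex.I - (κ : ℂ)) -
        (z - Real.sqrt 2) * ε / Complex.normSq ((z : ℂ) + (ε : ℂ) * Complex.I - (κ : ℂ)) =
        ε * (Real.sqrt 2 - κ) / Complex.normSq ((z : ℂ) + (ε : ℂ) * Complex.I - (κ : ℂ)) := by
      ring
    rw [heq]
    exact div_pos (mul_pos hε hcpos) hnsq
  have huim' : ∀ᶠ (ε : ℝ) in 𝓝[>] (0 : ℝ), 0 <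
      (((z : ℂ) + (ε : ℂ) * Complex.I - (Real.sqrt 2 : ℂ)) /
        ((z : ℂ) + (ε : ℂ) * Complex.I - (κ : ℂ))).im :=
    hev.mono fun ε hε => huim ε hε
  -- limit of ν from above
  set νp : ℂ := Complex.exp (((1 : ℂ) / 4) *
      ((Real.log (r / (z - κ)) : ℝ) + (Real.pi : ℝ) * Complex.I)) with hνpdef
  have hνu : Tendsto (fun ε : ℝ => nu κ ((z : ℂ) + (ε : ℂ) * Complex.I))
      (𝓝[>] (0 : ℝ)) (𝓝 νp) := by
    have h := tendsto_cpow_upper hx hu_lim huim' ((1 : ℂ) / 4)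
    rw [neg_neg] at h
    simpa only [nu] using h
  -- the function W along the upper path
  have hWm1 : ∀ ε : ℝ, (1 + 2 * ((z : ℂ) + (ε : ℂ) * Complex.I - (Real.sqrt 2 : ℂ)) /
      ((Real.sqrt 2 : ℂ) - (κ : ℂ))) - 1 =
      (((w - 1 : ℝ)) : ℂ) + (((2 / (Real.sqrt 2 - κ) : ℝ)) : ℂ) * (ε : ℂ) * Complex.I := by
    intro ε
    rw [hwdef, hrdef]
    push_cast
    field_simp
    ring
  have hWp1 : ∀ ε : ℝ, (1 + 2 * ((z : ℂ) + (ε : ℂ) * Complex.I - (Real.sqrt 2 : ℂ)) /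
      ((Real.sqrt 2 : ℂ) - (κ : ℂ))) + 1 =
      (((w + 1 : ℝ)) : ℂ) + (((2 / (Real.sqrt 2 - κ) : ℝ)) : ℂ) * (ε : ℂ) * Complex.I := by
    intro ε
    rw [hwdef, hrdef]
    push_cast
    field_simp
    ring
  have hblin : Tendsto (fun ε : ℝ => (((2 / (Real.sqrt 2 - κ) : ℝ)) : ℂ) * (ε : ℂ) * Complex.I)
      (𝓝[>] (0 : ℝ)) (𝓝 0) := by
    have h := (hε0.const_mul (((2 / (Real.sqrt 2 - κ) : ℝ)) : ℂ)).mul_const Complex.I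
    simpa [mul_assoc] using h
  have hblin_im : ∀ ε : ℝ, 0 < ε → ∀ a : ℝ,
      0 < ((a : ℂ) + (((2 / (Real.sqrt 2 - κ) : ℝ)) : ℂ) * (ε : ℂ) * Complex.I).im := by
    intro ε hε a
    simp only [Complex.add_im, Complex.ofReal_im, Complex.mul_im, Complex.I_im, Complex.I_re,
      Complex.ofReal_re, Complex.mul_re, mul_zero, mul_one, zero_add]
    have : 0 < 2 / (Real.sqrt 2 - κ) * ε := by positivity
    simpa using this
  -- limit of the two square-root factors
  have h1sq : Tendsto (fun ε : ℝ => ((1 + 2 * ((z : ℂ) + (ε : ℂ) * Complex.I -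
      (Real.sqrt 2 : ℂ)) / ((Real.sqrt 2 : ℂ) - (κ : ℂ))) - 1) ^ ((1 : ℂ) / 2))
      (𝓝[>] (0 : ℝ)) (𝓝 (Complex.I * (s1 : ℂ))) := by
    have hv : Tendsto (fun ε : ℝ => ((1 + 2 * ((z : ℂ) + (ε : ℂ) * Complex.I -
        (Real.sqrt 2 : ℂ)) / ((Real.sqrt 2 : ℂ) - (κ : ℂ))) - 1)) (𝓝[>] (0 : ℝ))
        (𝓝 (((w - 1 : ℝ)) : ℂ)) := by
      have h : Tendsto (fun ε : ℝ => (((w - 1 : ℝ)) : ℂ) +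
          (((2 / (Real.sqrt 2 - κ) : ℝ)) : ℂ) * (ε : ℂ) * Complex.I) (𝓝[>] (0 : ℝ))
          (𝓝 ((((w - 1 : ℝ)) : ℂ) + 0)) := tendsto_const_nhds.add hblin
      simp only [add_zero] at h
      exact Tendsto.congr (fun ε => (hWm1 ε).symm) h
    have him : ∀ᶠ (ε : ℝ) in 𝓝[>] (0 : ℝ), 0 < (((1 + 2 * ((z : ℂ) + (ε : ℂ) * Complex.I -
        (Real.sqrt 2 : ℂ)) / ((Real.sqrt 2 : ℂ) - (κ : ℂ))) - 1)).im := by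
      filter_upwards [hev] with ε hε
      rw [hWm1 ε]
      exact hblin_im ε hε (w - 1)
    have h := tendsto_sqrt_upper (by linarith : w - 1 < 0) hv him
    rw [show -(w - 1) = 1 - w by ring] at h
    exact h
  have h2sq : Tendsto (fun ε : ℝ => ((1 + 2 * ((z : ℂ) + (ε : ℂ) * Complex.I -
      (Real.sqrt 2 : ℂ)) / ((Real.sqrt 2 : ℂ) - (κ : ℂ))) + 1) ^ ((1 : ℂ) / 2))
      (𝓝[>] (0 : ℝ)) (𝓝 ((s2 : ℂ))) := by
    have hv : Tendsto (fun ε : ℝ => ((1 + 2 * ((z : ℂ) + (ε : ℂ) * Complex.I -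
        (Real.sqrt 2 : ℂ)) / ((Real.sqrt 2 : ℂ) - (κ : ℂ))) + 1)) (𝓝[>] (0 : ℝ))
        (𝓝 (((w + 1 : ℝ)) : ℂ)) := by
      have h : Tendsto (fun ε : ℝ => (((w + 1 : ℝ)) : ℂ) +
          (((2 / (Real.sqrt 2 - κ) : ℝ)) : ℂ) * (ε : ℂ) * Complex.I) (𝓝[>] (0 : ℝ))
          (𝓝 ((((w + 1 : ℝ)) : ℂ) + 0)) := tendsto_const_nhds.add hblin
      simp only [add_zero] at h
      exact Tendsto.congr (fun ε => (hWp1 ε).symm) h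
    have hslit : (((w + 1 : ℝ)) : ℂ) ∈ Complex.slitPlane := by
      left; simpa using by linarith
    have hcont := (continuousAt_cpow_const (b := (1 : ℂ)/2) hslit).tendsto.comp hv
    have hval : (((w + 1 : ℝ)) : ℂ) ^ ((1 : ℂ) / 2) = ((s2 : ℝ) : ℂ) := by
      rw [hs2def, Real.sqrt_eq_rpow, Complex.ofReal_cpow (by linarith : (0:ℝ) ≤ w + 1)]
      norm_num
    rw [← hval]
    exact hcont
  set jp : ℂ := (w : ℂ) + Complex.I * (s1 : ℂ) * (s2 : ℂ) with hjpdef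
  have hWlim : Tendsto (fun ε : ℝ => (1 + 2 * ((z : ℂ) + (ε : ℂ) * Complex.I -
      (Real.sqrt 2 : ℂ)) / ((Real.sqrt 2 : ℂ) - (κ : ℂ)))) (𝓝[>] (0 : ℝ)) (𝓝 ((w : ℂ))) := by
    have h : Tendsto (fun ε : ℝ => (((w - 1 : ℝ)) : ℂ) +
        (((2 / (Real.sqrt 2 - κ) : ℝ)) : ℂ) * (ε : ℂ) * Complex.I + 1) (𝓝[>] (0 : ℝ))
        (𝓝 ((((w - 1 : ℝ)) : ℂ) + 0 + 1)) :=
      (tendsto_const_nhds.add hblin).add tendsto_const_nhds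
    have h2 : Tendsto (fun ε : ℝ => (1 + 2 * ((z : ℂ) + (ε : ℂ) * Complex.I -
        (Real.sqrt 2 : ℂ)) / ((Real.sqrt 2 : ℂ) - (κ : ℂ)))) (𝓝[>] (0 : ℝ))
        (𝓝 ((((w - 1 : ℝ)) : ℂ) + 0 + 1)) := by
      refine h.congr fun ε => ?_
      rw [← hWm1 ε]
      ring
    have h3 : (((w - 1 : ℝ)) : ℂ) + 0 + 1 = ((w : ℝ) : ℂ) := by push_cast; ring
    rwa [h3] at h2
  have hjlim : Tendsto (fun ε : ℝ => jmap (1 + 2 * ((z : ℂ) + (ε : ℂ) * Complex.I -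
      (Real.sqrt 2 : ℂ)) / ((Real.sqrt 2 : ℂ) - (κ : ℂ)))) (𝓝[>] (0 : ℝ)) (𝓝 jp) := by
    simp only [jmap]
    exact hWlim.add (h1sq.mul h2sq)
  -- properties of jp and bp
  have hnormjp : Complex.normSq jp = 1 := by
    have : jp = (w : ℂ) + ((s1 * s2 : ℝ) : ℂ) * Complex.I := by rw [hjpdef]; push_cast; ring
    rw [this, Complex.normSq_add_mul_I]
    nlinarith [hs1sq, hs2sq]
  have hjp_ne : jp ≠ 0 := by
    intro h
    rw [h, map_zero] at hnormjp
    norm_num at hnormjp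
  have hjpinv : jp⁻¹ = (starRingEnd ℂ) jp :=
    inv_eq_of_mul_eq_one_right (by rw [Complex.mul_conj, hnormjp]; norm_num)
  set bp : ℂ := ((z : ℂ) - (Real.sqrt 2 : ℂ)) / jp with hbpdef
  have hbp_eq : bp = ((-(r * w) : ℝ) : ℂ) + ((r * (s1 * s2) : ℝ) : ℂ) * Complex.I := by
    rw [hbpdef, div_eq_mul_inv, hjpinv, hjpdef]
    rw [show ((z : ℂ) - (Real.sqrt 2 : ℂ)) = -(r : ℂ) by rw [hrdef]; push_cast; ring]
    rw [map_add, map_mul, map_mul, Complex.conj_ofReal, Complex.conj_ofReal,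
      Complex.conj_ofReal, Complex.conj_I]
    push_cast
    ring
  have hbpim : bp.im = r * (s1 * s2) := by rw [hbp_eq]; simp
  have hbpim_pos : 0 < bp.im := by rw [hbpim]; positivity
  have hbp_ne : bp ≠ 0 := by
    intro h
    rw [h] at hbpim_pos
    simp at hbpim_pos
  have hbp_slit : bp ∈ Complex.slitPlane := Or.inr hbpim_pos.ne'
  have habs_bp : ‖bp‖ = r := by
    rw [hbpdef, norm_div]
    have h1 : ‖(z : ℂ) - (Real.sqrt 2 : ℂ)‖ = r := by
      rw [← Complex.ofReal_sub, Complex.norm_real, Real.norm_eq_abs, abs_of_neg (by linarith : z - Real.sqrt 2 < 0),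
        hrdef]
      ring
    have h2 : ‖jp‖ = 1 := by
      rw [Complex.norm_def, hnormjp, Real.sqrt_one]
    rw [h1, h2, div_one]
  set Dp : ℂ := bp ^ ((α : ℂ) / 2) with hDpdef
  have hDp_ne : Dp ≠ 0 := by
    rw [hDpdef, Complex.cpow_def_of_ne_zero hbp_ne]
    exact Complex.exp_ne_zero _
  have hDu : Tendsto (fun ε : ℝ => szego α κ ((z : ℂ) + (ε : ℂ) * Complex.I))
      (𝓝[>] (0 : ℝ)) (𝓝 Dp) := by
    have hbase : Tendsto (fun ε : ℝ => ((z : ℂ) + (ε : ℂ) * Complex.I - (Real.sqrt 2 : ℂ)) /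
        jmap (1 + 2 * ((z : ℂ) + (ε : ℂ) * Complex.I - (Real.sqrt 2 : ℂ)) /
          ((Real.sqrt 2 : ℂ) - (κ : ℂ)))) (𝓝[>] (0 : ℝ)) (𝓝 bp) :=
      hnum.div hjlim hjp_ne
    have h := (continuousAt_cpow_const (b := (α : ℂ)/2) hbp_slit).tendsto.comp hbase
    simpa only [szego, Function.comp_def] using h
  -- the lower path, via conjugation
  have hconjpt : ∀ ε : ℝ, (z : ℂ) - (ε : ℂ) * Complex.I =
      (starRingEnd ℂ) ((z : ℂ) + (ε : ℂ) * Complex.I) := by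
    intro ε
    rw [map_add, map_mul, Complex.conj_ofReal, Complex.conj_ofReal, Complex.conj_I]
    ring
  have hν_symm : ∀ ε : ℝ, 0 < ε → nu κ ((z : ℂ) - (ε : ℂ) * Complex.I) =
      (starRingEnd ℂ) (nu κ ((z : ℂ) + (ε : ℂ) * Complex.I)) := by
    intro ε hε
    simp only [nu, hconjpt ε]
    rw [show (starRingEnd ℂ) ((z : ℂ) + (ε : ℂ) * Complex.I) - (Real.sqrt 2 : ℂ) =
        (starRingEnd ℂ) ((z : ℂ) + (ε : ℂ) * Complex.I - (Real.sqrt 2 : ℂ)) by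
      rw [map_sub, Complex.conj_ofReal]]
    rw [show (starRingEnd ℂ) ((z : ℂ) + (ε : ℂ) * Complex.I) - (κ : ℂ) =
        (starRingEnd ℂ) ((z : ℂ) + (ε : ℂ) * Complex.I - (κ : ℂ)) by
      rw [map_sub, Complex.conj_ofReal]]
    rw [← map_div₀]
    exact conj_cpow_real (huim ε hε).ne' ((1 : ℂ) / 4) (by rw [map_div₀, map_one, map_ofNat])
  have hν_lower : Tendsto (fun ε : ℝ => nu κ ((z : ℂ) - (ε : ℂ) * Complex.I))
      (𝓝[>] (0 : ℝ)) (𝓝 ((starRingEnd ℂ) νp)) := by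
    have h := ((continuous_star.tendsto νp).comp hνu : Tendsto
      (fun ε : ℝ => (starRingEnd ℂ) (nu κ ((z : ℂ) + (ε : ℂ) * Complex.I)))
      (𝓝[>] (0 : ℝ)) (𝓝 ((starRingEnd ℂ) νp)))
    exact h.congr' (hev.mono fun ε hε => (hν_symm ε hε).symm)
  have hWim : ∀ ε : ℝ, 0 < ε → 0 < (1 + 2 * ((z : ℂ) + (ε : ℂ) * Complex.I -
      (Real.sqrt 2 : ℂ)) / ((Real.sqrt 2 : ℂ) - (κ : ℂ))).im := by
    intro ε hε
    have h := hblin_im ε hε (w - 1)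
    rw [← hWm1 ε] at h
    simpa using h
  have hbase_im : ∀ᶠ (ε : ℝ) in 𝓝[>] (0 : ℝ), 0 <
      (((z : ℂ) + (ε : ℂ) * Complex.I - (Real.sqrt 2 : ℂ)) /
        jmap (1 + 2 * ((z : ℂ) + (ε : ℂ) * Complex.I - (Real.sqrt 2 : ℂ)) /
          ((Real.sqrt 2 : ℂ) - (κ : ℂ)))).im := by
    have hbase : Tendsto (fun ε : ℝ => ((z : ℂ) + (ε : ℂ) * Complex.I - (Real.sqrt 2 : ℂ)) /
        jmap (1 + 2 * ((z : ℂ) + (ε : ℂ) * Complex.I - (Real.sqrt 2 : ℂ)) /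
          ((Real.sqrt 2 : ℂ) - (κ : ℂ)))) (𝓝[>] (0 : ℝ)) (𝓝 bp) :=
      hnum.div hjlim hjp_ne
    have h := (Complex.continuous_im.tendsto bp).comp hbase
    exact h.eventually (eventually_gt_nhds hbpim_pos)
  have hD_symm : ∀ᶠ (ε : ℝ) in 𝓝[>] (0 : ℝ), szego α κ ((z : ℂ) - (ε : ℂ) * Complex.I) =
      (starRingEnd ℂ) (szego α κ ((z : ℂ) + (ε : ℂ) * Complex.I)) := by
    filter_upwards [hev, hbase_im] with ε hε him2
    simp only [szego, hconjpt ε]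
    have hWc : 1 + 2 * ((starRingEnd ℂ) ((z : ℂ) + (ε : ℂ) * Complex.I) - (Real.sqrt 2 : ℂ)) /
        ((Real.sqrt 2 : ℂ) - (κ : ℂ)) =
        (starRingEnd ℂ) (1 + 2 * ((z : ℂ) + (ε : ℂ) * Complex.I - (Real.sqrt 2 : ℂ)) /
          ((Real.sqrt 2 : ℂ) - (κ : ℂ))) := by
      simp only [map_add, map_one, map_div₀, map_mul, map_sub, map_ofNat,
        Complex.conj_ofReal]
    rw [hWc, jmap_conj (hWim ε hε)]
    rw [show (starRingEnd ℂ) ((z : ℂ) + (ε : ℂ) * Complex.I) - (Real.sqrt 2 : ℂ) =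
        (starRingEnd ℂ) ((z : ℂ) + (ε : ℂ) * Complex.I - (Real.sqrt 2 : ℂ)) by
      rw [map_sub, Complex.conj_ofReal]]
    rw [← map_div₀]
    exact conj_cpow_real him2.ne' ((α : ℂ) / 2) (by rw [map_div₀, Complex.conj_ofReal, map_ofNat])
  have hD_lower : Tendsto (fun ε : ℝ => szego α κ ((z : ℂ) - (ε : ℂ) * Complex.I))
      (𝓝[>] (0 : ℝ)) (𝓝 ((starRingEnd ℂ) Dp)) := by
    have h := ((continuous_star.tendsto Dp).comp hDu : Tendsto
      (fun ε : ℝ => (starRingEnd ℂ) (szego α κ ((z : ℂ) + (ε : ℂ) * Complex.I)))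
      (𝓝[>] (0 : ℝ)) (𝓝 ((starRingEnd ℂ) Dp)))
    exact h.congr' (hD_symm.mono fun ε hε => hε.symm)
  -- nonvanishing of the limits
  have hνp_ne : νp ≠ 0 := Complex.exp_ne_zero _
  have hνm_ne : (starRingEnd ℂ) νp ≠ 0 := star_ne_zero.2 hνp_ne
  have hDm_ne : (starRingEnd ℂ) Dp ≠ 0 := star_ne_zero.2 hDp_ne
  -- the two candidate limits
  refine ⟨Pform ((chi α κ : ℝ) : ℂ) νp Dp,
    Pform ((chi α κ : ℝ) : ℂ) ((starRingEnd ℂ) νp) ((starRingEnd ℂ) Dp), ?_, ?_, ?_⟩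
  · intro i j
    simp only [Pmat_eq]
    exact Pform_tendsto hνu hDu hνp_ne hDp_ne i j
  · intro i j
    simp only [Pmat_eq]
    exact Pform_tendsto hν_lower hD_lower hνm_ne hDm_ne i j
  -- the jump relation
  · set ρ : ℂ := ((r ^ α : ℝ) : ℂ) with hρdef
    have hρ_ne : ρ ≠ 0 := by
      rw [hρdef]
      exact_mod_cast (Real.rpow_pos_of_pos hr α).ne'
    have hconj : (starRingEnd ℂ) νp = Complex.exp (((1 : ℂ) / 4) *
        ((Real.log (r / (z - κ)) : ℝ) - (Real.pi : ℝ) * Complex.I)) := by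
      rw [hνpdef, ← Complex.exp_conj]
      congr 1
      rw [map_mul, map_add, map_mul, map_div₀, map_one, map_ofNat, Complex.conj_ofReal,
        Complex.conj_ofReal, Complex.conj_I]
      ring
    have hνrel : νp = Complex.I * (starRingEnd ℂ) νp := by
      have hsplit : Complex.exp (((1 : ℂ) / 4) *
          ((Real.log (r / (z - κ)) : ℝ) + (Real.pi : ℝ) * Complex.I)) =
          Complex.exp (((Real.pi / 2 : ℝ) : ℂ) * Complex.I) *
            Complex.exp (((1 : ℂ) / 4) *
              ((Real.log (r / (z - κ)) : ℝ) - (Real.pi : ℝ) * Complex.I)) := by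
        rw [← Complex.exp_add]
        congr 1
        push_cast
        ring
      rw [hconj, hνpdef, hsplit, exp_pi_div_two_mul_I]
    have hDrel : Dp * (starRingEnd ℂ) Dp = ρ := by
      rw [Complex.mul_conj, hρdef]
      congr 1
      rw [Complex.normSq_eq_norm_sq]
      have : ‖Dp‖ = r ^ (α / 2) := by
        rw [hDpdef, show ((α : ℂ) / 2) = (((α / 2 : ℝ)) : ℂ) by push_cast; ring,
          Complex.norm_cpow_real, habs_bp]
      rw [this, sq, ← Real.rpow_add hr]
      norm_num
    have hDrel' : Dp = ρ * ((starRingEnd ℂ) Dp)⁻¹ := (eq_mul_inv_iff_mul_eq₀ hDm_ne).2 hDrel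
    rw [show ((r ^ (-α) : ℝ) : ℂ) = ρ⁻¹ by
      rw [Real.rpow_neg hr.le, Complex.ofReal_inv, hρdef]]
    conv_lhs => rw [hνrel, hDrel']
    exact Pform_jump _ _ _ _ hνm_ne hDm_ne hρ_ne
end

section
/- Let α > −1 and κ < √2 be real, and let P(z) be the outer parametrix, i.e. P(z) := diag(χ, χ^{−1}) · (1/2)·[[ν(z) + ν(z)^{−1}, −i(ν(z) − ν(z)^{−1})], [i(ν(z) − ν(z)^{−1}), ν(z) + ν(z)^{−1}]] · diag(D(z)^{−1}, D(z)) on ℂ \ [κ, √2], with ν, D, χ as in the construction. Then lim_{z→∞} P(z) = I (the 2 × 2 identity matrix) and lim_{z→∞} z·(P(z) − I) = P₁, where P₁ = (1/4)(√2 − κ) · diag(χ, χ^{−1}) · [[α, i], [−i, −α]] · diag(χ^{−1}, χ). -/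
open Filter Topology Set
open Complex

lemma mul_im_sin (z w : ℂ) :
    (z * w).im = ‖z‖ * ‖w‖ * Real.sin (z.arg + w.arg) := by
  conv_lhs => rw [← Complex.norm_mul_exp_arg_mul_I z, ← Complex.norm_mul_exp_arg_mul_I w]
  rw [show ((‖z‖ : ℂ) * exp (z.arg * I)) * ((‖w‖ : ℂ) * exp (w.arg * I))
      = ((‖z‖ * ‖w‖ : ℝ) : ℂ) * exp ((↑(z.arg + w.arg)) * I) by
    rw [Complex.ofReal_add, add_mul, Complex.exp_add]; push_cast; ring]
  simp [Complex.mul_im, Complex.exp_im, Complex.exp_re]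

lemma arg_add_mem (z w : ℂ) (hz : z ≠ 0) (hw : 0 < w.re) (him : (z * w).im = z.im) :
    z.arg + w.arg ∈ Set.Ioc (-Real.pi) Real.pi := by
  have hw0 : w ≠ 0 := fun h => by simp [h] at hw
  have hwa : |w.arg| < Real.pi / 2 := Complex.abs_arg_lt_pi_div_two_iff.2 (Or.inl hw)
  have hwa1 := abs_lt.1 hwa
  have hpi := Real.pi_pos
  have hsin : (z * w).im = ‖z‖ * ‖w‖ * Real.sin (z.arg + w.arg) :=
    mul_im_sin z w
  have habs : 0 < ‖z‖ * ‖w‖ :=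
    mul_pos (norm_pos_iff.mpr hz) (norm_pos_iff.mpr hw0)
  constructor
  · by_contra h
    push_neg at h
    -- z.arg + w.arg ≤ -π, so z.arg < -π/2, z.im < 0, but sin(sum) ≥ 0
    have h1 : z.arg < -(Real.pi / 2) := by nlinarith [Complex.arg_le_pi z]
    have h2 : z.im < 0 := Complex.arg_neg_iff.1 (by linarith)
    have h3 : 0 ≤ Real.sin (z.arg + w.arg) := by
      have : Real.sin (z.arg + w.arg) = Real.sin (z.arg + w.arg + 2 * Real.pi) := by
        rw [Real.sin_add_two_pi]
      rw [this]
      apply Real.sin_nonneg_of_nonneg_of_le_pi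
      · nlinarith [Complex.neg_pi_lt_arg z]
      · nlinarith
    nlinarith
  · by_contra h
    push_neg at h
    -- z.arg + w.arg > π, so z.arg > π/2, z.im ≥ 0, but sin(sum) < 0
    have h1 : Real.pi / 2 < z.arg := by nlinarith
    have h2 : 0 ≤ z.im := by
      by_contra h2
      push_neg at h2
      have := Complex.arg_neg_iff.2 h2
      linarith
    have h3 : Real.sin (z.arg + w.arg) < 0 := by
      have h4 : 0 < Real.sin (z.arg + w.arg - Real.pi) :=
        Real.sin_pos_of_pos_of_lt_pi (by linarith)
          (by nlinarith [Complex.arg_le_pi z])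
      have h5 := Real.sin_sub_pi (z.arg + w.arg)
      linarith
    nlinarith

lemma cpow_split (z w : ℂ) (c : ℂ) (hz : z ≠ 0) (hw : 0 < w.re) (him : (z * w).im = z.im) :
    (z * w) ^ c = z ^ c * w ^ c := by
  have hw0 : w ≠ 0 := fun h => by simp [h] at hw
  rw [Complex.cpow_def_of_ne_zero (mul_ne_zero hz hw0),
    Complex.cpow_def_of_ne_zero hz, Complex.cpow_def_of_ne_zero hw0,
    Complex.log_mul hz hw0 (arg_add_mem z w hz hw him), add_mul, Complex.exp_add]

lemma sqrt_shift (c : ℝ) (z : ℂ) (h : |c| < ‖z‖) (e : ℂ) :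
    (z - (c : ℂ)) ^ e = z ^ e * (1 - (c : ℂ) / z) ^ e := by
  have hz : z ≠ 0 := by
    intro h0; rw [h0] at h; simp at h; linarith [abs_nonneg c]
  have hzz : z - (c : ℂ) = z * (1 - (c : ℂ) / z) := by field_simp
  have hw : 0 < (1 - (c : ℂ) / z).re := by
    have h1 : ((c : ℂ) / z).re ≤ ‖(c : ℂ) / z‖ := Complex.re_le_norm _
    have h2 : ‖(c : ℂ) / z‖ < 1 := by
      rw [norm_div, Complex.norm_real, Real.norm_eq_abs, div_lt_one (norm_pos_iff.mpr hz)]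
      exact h
    simp only [Complex.sub_re, Complex.one_re]
    linarith
  have him : (z * (1 - (c : ℂ) / z)).im = z.im := by
    rw [← hzz]; simp
  rw [hzz, cpow_split _ _ _ hz hw him]

lemma cpow_real_mul (r : ℝ) (hr : 0 < r) (x : ℂ) (hx : x ≠ 0) (c : ℂ) :
    ((r : ℂ) * x) ^ c = (r : ℂ) ^ c * x ^ c := by
  have hr0 : (r : ℂ) ≠ 0 := Complex.ofReal_ne_zero.mpr hr.ne'
  rw [Complex.cpow_def_of_ne_zero (mul_ne_zero hr0 hx), Complex.cpow_def_of_ne_zero hr0,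
    Complex.cpow_def_of_ne_zero hx, Complex.log_ofReal_mul hr hx,
    ← Complex.ofReal_log hr.le, add_mul, Complex.exp_add]

lemma sqrt_mul_self (x : ℂ) (hx : x ≠ 0) : x ^ ((1 : ℂ)/2) * x ^ ((1 : ℂ)/2) = x := by
  rw [← Complex.cpow_add _ _ hx]
  norm_num

lemma re_sqrt_nonneg (x : ℂ) : 0 ≤ (x ^ ((1 : ℂ)/2)).re := by
  rcases eq_or_ne x 0 with rfl | hx
  · rw [Complex.zero_cpow (by norm_num : (1 : ℂ)/2 ≠ 0)]; simp
  · rw [Complex.cpow_def_of_ne_zero hx, Complex.exp_re]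
    apply mul_nonneg (Real.exp_nonneg _)
    apply Real.cos_nonneg_of_mem_Icc
    have him : (Complex.log x * ((1 : ℂ)/2)).im = x.arg / 2 := by
      simp [Complex.mul_im, Complex.log_im]
      ring
    rw [him]
    constructor
    · have := Complex.neg_pi_lt_arg x; linarith
    · have := Complex.arg_le_pi x; linarith [Real.pi_pos]

lemma sqrt_near_one {x : ℂ} (h : ‖x - 1‖ < 1) :
    ‖x ^ ((1 : ℂ)/2) - 1‖ ≤ ‖x - 1‖ := by
  have hx : x ≠ 0 := by
    intro h0; rw [h0] at h; simp at h
  have hs := sqrt_mul_self x hx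
  set s := x ^ ((1 : ℂ)/2) with hsdef
  have key : (s - 1) * (s + 1) = x - 1 := by
    have : (s - 1) * (s + 1) = s * s - 1 := by ring
    rw [this, hs]
  have habs : 1 ≤ ‖s + 1‖ := by
    have h1 : 1 ≤ (s + 1).re := by
      simp only [Complex.add_re, Complex.one_re]
      linarith [re_sqrt_nonneg x]
    exact le_trans h1 (Complex.re_le_norm _)
  have habs0 : ‖s + 1‖ ≠ 0 := by positivity
  calc ‖s - 1‖ = ‖x - 1‖ / ‖s + 1‖ := by
        rw [← key, norm_mul, mul_div_assoc, div_self habs0, mul_one]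
    _ ≤ ‖x - 1‖ := div_le_self (norm_nonneg _) habs

noncomputable def auxB (s k : ℝ) (u : ℂ) : ℂ :=
  (1 - (s : ℂ) * u) ^ ((1 : ℂ)/2) * (1 - (k : ℂ) * u) ^ ((1 : ℂ)/2)

noncomputable def auxN (s k : ℝ) (u : ℂ) : ℂ :=
  ((1 - (s : ℂ) * u) / (1 - (k : ℂ) * u)) ^ ((1 : ℂ)/4)

noncomputable def auxR (s k : ℝ) (u : ℂ) : ℂ :=
  (((s - k)/2 : ℝ) : ℂ) * (1 - (s : ℂ) * u) /
    ((1 - (((s + k)/2 : ℝ) : ℂ) * u) + auxB s k u)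

noncomputable def auxG (a s k : ℝ) (u : ℂ) : ℂ := auxR s k u ^ ((a : ℂ)/2)

lemma nu_eq (κ : ℝ) (z : ℂ) (hz : 4 * (Real.sqrt 2 + |κ| + 1) < ‖z‖) :
    nu κ z = auxN (Real.sqrt 2) κ (1/z) := by
  have hs0 : 0 ≤ Real.sqrt 2 := Real.sqrt_nonneg 2
  have hz4 : 4 < ‖z‖ := by nlinarith [abs_nonneg κ]
  have hz0 : z ≠ 0 := by
    intro h; rw [h] at hz4; simp at hz4; linarith
  have hzk : z - (κ : ℂ) ≠ 0 := by
    intro h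
    rw [sub_eq_zero.mp h, Complex.norm_real, Real.norm_eq_abs] at hz
    nlinarith [abs_nonneg κ, Real.sqrt_nonneg 2]
  have e1 : 1 - ((Real.sqrt 2 : ℝ) : ℂ) * (1/z) = (z - (Real.sqrt 2 : ℂ))/z := by
    field_simp
  have e2 : 1 - (κ : ℂ) * (1/z) = (z - (κ : ℂ))/z := by field_simp
  unfold nu auxN
  rw [e1, e2]
  congr 1
  field_simp

lemma auxB_near (s k : ℝ) (hs : 0 ≤ s) (u : ℂ)
    (hsu : ‖(s : ℂ) * u‖ ≤ 1/4) (hku : ‖(k : ℂ) * u‖ ≤ 1/4) :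
    ‖auxB s k u - 1‖ ≤ 9/16 := by
  set P := (1 - (s : ℂ) * u) ^ ((1 : ℂ)/2)
  set Q := (1 - (k : ℂ) * u) ^ ((1 : ℂ)/2)
  have hP : ‖P - 1‖ ≤ 1/4 := by
    have h1 : ‖(1 - (s : ℂ) * u) - 1‖ < 1 := by
      simpa using lt_of_le_of_lt hsu (by norm_num)
    have := sqrt_near_one h1
    simp only [sub_sub_cancel_left, norm_neg] at this ⊢
    exact le_trans this (by simpa using hsu)
  have hQ : ‖Q - 1‖ ≤ 1/4 := by
    have h1 : ‖(1 - (k : ℂ) * u) - 1‖ < 1 := by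
      simpa using lt_of_le_of_lt hku (by norm_num)
    have := sqrt_near_one h1
    exact le_trans this (by simpa using hku)
  have key : auxB s k u - 1 = (P - 1) * (Q - 1) + (P - 1) + (Q - 1) := by
    unfold auxB; ring
  rw [key]
  calc ‖(P - 1) * (Q - 1) + (P - 1) + (Q - 1)‖
      ≤ ‖(P - 1) * (Q - 1) + (P - 1)‖ + ‖Q - 1‖ := norm_add_le _ _
    _ ≤ ‖(P - 1) * (Q - 1)‖ + ‖P - 1‖ + ‖Q - 1‖ := by
        linarith [norm_add_le ((P - 1) * (Q - 1)) (P - 1)]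
    _ ≤ 1/4 * (1/4) + 1/4 + 1/4 := by
        rw [norm_mul]
        gcongr <;> positivity
    _ ≤ 9/16 := by norm_num

lemma szego_eq (α κ : ℝ) (hκ : κ < Real.sqrt 2) (z : ℂ)
    (hz : 4 * (Real.sqrt 2 + |κ| + 1) < ‖z‖) :
    szego α κ z = auxG α (Real.sqrt 2) κ (1/z) := by
  unfold szego auxG auxR
  set s := Real.sqrt 2 with hsdef
  have hs0 : 0 ≤ s := Real.sqrt_nonneg 2
  have hδ : 0 < s - κ := sub_pos.2 hκ
  have hz4 : 4 < ‖z‖ := by nlinarith [abs_nonneg κ]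
  have hz0 : z ≠ 0 := by intro h; rw [h] at hz4; simp at hz4; linarith
  have hzs : z - (s : ℂ) ≠ 0 := by
    intro h
    rw [sub_eq_zero.mp h, Complex.norm_real, Real.norm_eq_abs, _root_.abs_of_nonneg hs0] at hz
    nlinarith [abs_nonneg κ]
  have hzk : z - (κ : ℂ) ≠ 0 := by
    intro h
    rw [sub_eq_zero.mp h, Complex.norm_real, Real.norm_eq_abs] at hz
    nlinarith [abs_nonneg κ]
  have habs_s : |s| < ‖z‖ := by
    rw [_root_.abs_of_nonneg hs0]; nlinarith [abs_nonneg κ]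
  have habs_k : |κ| < ‖z‖ := by nlinarith [abs_nonneg κ]
  have hsk : (s : ℂ) - (κ : ℂ) ≠ 0 := by
    rw [← Complex.ofReal_sub]
    exact Complex.ofReal_ne_zero.mpr hδ.ne'
  have ht : (0 : ℝ) < 2/(s - κ) := by positivity
  have ht0 : ((2/(s - κ) : ℝ) : ℂ) ≠ 0 := Complex.ofReal_ne_zero.mpr ht.ne'
  set w := 1 + 2 * (z - (s : ℂ)) / ((s : ℂ) - (κ : ℂ)) with hwdef
  have e1 : w - 1 = ((2/(s - κ) : ℝ) : ℂ) * (z - (s : ℂ)) := by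
    rw [hwdef]; push_cast; field_simp; ring
  have e2 : w + 1 = ((2/(s - κ) : ℝ) : ℂ) * (z - (κ : ℂ)) := by
    rw [hwdef]; push_cast; field_simp; ring
  have hb1 : ‖(s : ℂ) * (1/z)‖ ≤ 1/4 := by
    rw [norm_mul, norm_div, norm_one, Complex.norm_real, Real.norm_eq_abs, _root_.abs_of_nonneg hs0]
    rw [mul_one_div, div_le_iff₀ (by linarith)]
    nlinarith [abs_nonneg κ]
  have hb2 : ‖(κ : ℂ) * (1/z)‖ ≤ 1/4 := by
    rw [norm_mul, norm_div, norm_one, Complex.norm_real, Real.norm_eq_abs]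
    rw [mul_one_div, div_le_iff₀ (by linarith)]
    nlinarith [abs_nonneg κ, abs_nonneg s]
  have hb3 : ‖(((s + κ)/2 : ℝ) : ℂ) * (1/z)‖ ≤ 1/4 := by
    rw [norm_mul, norm_div, norm_one, Complex.norm_real, Real.norm_eq_abs]
    rw [mul_one_div, div_le_iff₀ (by linarith)]
    have : |(s + κ)/2| ≤ s + |κ| := by
      rw [abs_div]
      have := abs_add_le s κ
      rw [_root_.abs_of_nonneg hs0] at this
      simp only [_root_.abs_two]
      linarith [abs_nonneg (s + κ)]
    nlinarith
  set h := (1 - (((s + κ)/2 : ℝ) : ℂ) * (1/z)) + auxB s κ (1/z) with hhdef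
  have hB9 : ‖auxB s κ (1/z) - 1‖ ≤ 9/16 := auxB_near s κ hs0 (1/z) hb1 hb2
  have hh2 : ‖h - 2‖ ≤ 13/16 := by
    have hd : h - 2 = -((((s + κ)/2 : ℝ) : ℂ) * (1/z)) + (auxB s κ (1/z) - 1) := by
      rw [hhdef]; ring
    rw [hd]
    calc ‖_‖ ≤ ‖-((((s + κ)/2 : ℝ) : ℂ) * (1/z))‖
          + ‖auxB s κ (1/z) - 1‖ := norm_add_le _ _
      _ ≤ 1/4 + 9/16 := by rw [norm_neg]; gcongr
      _ ≤ 13/16 := by norm_num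
  have hh0 : h ≠ 0 := by
    intro h0
    rw [h0] at hh2
    norm_num at hh2
  have hBsplit : (w - 1) ^ ((1 : ℂ)/2) * (w + 1) ^ ((1 : ℂ)/2)
      = ((2/(s - κ) : ℝ) : ℂ) * z * auxB s κ (1/z) := by
    rw [e1, e2, cpow_real_mul _ ht _ hzs, cpow_real_mul _ ht _ hzk,
      sqrt_shift s z habs_s, sqrt_shift κ z habs_k]
    have hs1z : 1 - (s : ℂ)/z = 1 - (s : ℂ) * (1/z) := by ring
    have hk1z : 1 - (κ : ℂ)/z = 1 - (κ : ℂ) * (1/z) := by ring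
    rw [hs1z, hk1z]
    unfold auxB
    set T := ((2/(s - κ) : ℝ) : ℂ) ^ ((1 : ℂ)/2)
    set Z := z ^ ((1 : ℂ)/2)
    set P := (1 - (s : ℂ) * (1/z)) ^ ((1 : ℂ)/2)
    set Q := (1 - (κ : ℂ) * (1/z)) ^ ((1 : ℂ)/2)
    calc T * (Z * P) * (T * (Z * Q)) = (T * T) * ((Z * Z) * (P * Q)) := by ring
      _ = ((2/(s - κ) : ℝ) : ℂ) * z * (P * Q) := by
          rw [sqrt_mul_self _ ht0, sqrt_mul_self _ hz0]; ring
  have hjmap : jmap w = ((2/(s - κ) : ℝ) : ℂ) * z * h := by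
    unfold jmap
    rw [hBsplit, hhdef]
    have hw2 : w = ((2/(s - κ) : ℝ) : ℂ) * z * (1 - (((s + κ)/2 : ℝ) : ℂ) * (1/z)) := by
      rw [hwdef]; push_cast; field_simp; ring
    rw [hw2]; ring
  have hnum : z - (s : ℂ) = z * (1 - (s : ℂ) * (1/z)) := by field_simp
  have hct : (((s - κ)/2 : ℝ) : ℂ) * ((2/(s - κ) : ℝ) : ℂ) = 1 := by
    rw [← Complex.ofReal_mul, show (s - κ)/2 * (2/(s - κ)) = 1 by field_simp,
      Complex.ofReal_one]
  rw [hjmap]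
  congr 1
  rw [hnum, show ((2/(s - κ) : ℝ) : ℂ) * z * h = z * (((2/(s - κ) : ℝ) : ℂ) * h) by ring,
    mul_div_mul_left _ _ hz0,
    div_eq_div_iff (mul_ne_zero ht0 hh0) hh0]
  linear_combination (-((1 - (s : ℂ) * (1/z)) * h)) * hct

lemma auxB_zero (s k : ℝ) : auxB s k 0 = 1 := by
  unfold auxB; simp

lemma hasDerivAt_auxB (s k : ℝ) :
    HasDerivAt (auxB s k) (-(((s + k)/2 : ℝ) : ℂ)) 0 := by
  have h1 : HasDerivAt (fun u : ℂ => 1 - (s : ℂ) * u) (-(s : ℂ)) 0 := by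
    simpa using ((hasDerivAt_id (0 : ℂ)).const_mul (s : ℂ)).const_sub 1
  have h2 : HasDerivAt (fun u : ℂ => 1 - (k : ℂ) * u) (-(k : ℂ)) 0 := by
    simpa using ((hasDerivAt_id (0 : ℂ)).const_mul (k : ℂ)).const_sub 1
  have hp : HasDerivAt (fun u : ℂ => (1 - (s : ℂ) * u) ^ ((1 : ℂ)/2))
      (((1 : ℂ)/2) * (1 - (s : ℂ) * 0) ^ ((1 : ℂ)/2 - 1) * (-(s : ℂ))) 0 :=
    h1.cpow_const (by simp)
  have hq : HasDerivAt (fun u : ℂ => (1 - (k : ℂ) * u) ^ ((1 : ℂ)/2))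
      (((1 : ℂ)/2) * (1 - (k : ℂ) * 0) ^ ((1 : ℂ)/2 - 1) * (-(k : ℂ))) 0 :=
    h2.cpow_const (by simp)
  have := hp.mul hq
  simp only [mul_zero, sub_zero, Complex.one_cpow] at this
  refine this.congr_deriv ?_
  push_cast
  ring

lemma auxN_zero (s k : ℝ) : auxN s k 0 = 1 := by
  unfold auxN; simp

lemma hasDerivAt_auxN (s k : ℝ) :
    HasDerivAt (auxN s k) (-((((s - k) : ℝ) : ℂ))/4) 0 := by
  have h1 : HasDerivAt (fun u : ℂ => 1 - (s : ℂ) * u) (-(s : ℂ)) 0 := by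
    simpa using ((hasDerivAt_id (0 : ℂ)).const_mul (s : ℂ)).const_sub 1
  have h2 : HasDerivAt (fun u : ℂ => 1 - (k : ℂ) * u) (-(k : ℂ)) 0 := by
    simpa using ((hasDerivAt_id (0 : ℂ)).const_mul (k : ℂ)).const_sub 1
  have hq : HasDerivAt (fun u : ℂ => (1 - (s : ℂ) * u) / (1 - (k : ℂ) * u))
      ((-(s : ℂ) * (1 - (k : ℂ) * 0) - (1 - (s : ℂ) * 0) * (-(k : ℂ)))
        / (1 - (k : ℂ) * 0) ^ 2) 0 :=
    h1.div h2 (by simp)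
  have := hq.cpow_const (c := (1 : ℂ)/4) (by simp)
  simp only [mul_zero, sub_zero, Complex.one_cpow, div_one, one_pow] at this
  refine this.congr_deriv ?_
  push_cast
  norm_num
  ring

lemma auxR_zero (s k : ℝ) : auxR s k 0 = (((s - k)/4 : ℝ) : ℂ) := by
  unfold auxR
  rw [auxB_zero]
  push_cast
  norm_num
  ring

lemma hasDerivAt_auxR (s k : ℝ) :
    HasDerivAt (auxR s k) (-((((s - k) : ℝ) : ℂ))^2/8) 0 := by
  have hf : HasDerivAt (fun u : ℂ => (((s - k)/2 : ℝ) : ℂ) * (1 - (s : ℂ) * u))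
      ((((s - k)/2 : ℝ) : ℂ) * (-(s : ℂ))) 0 := by
    have h1 : HasDerivAt (fun u : ℂ => 1 - (s : ℂ) * u) (-(s : ℂ)) 0 := by
      simpa using ((hasDerivAt_id (0 : ℂ)).const_mul (s : ℂ)).const_sub 1
    exact h1.const_mul _
  have hg : HasDerivAt (fun u : ℂ => (1 - (((s + k)/2 : ℝ) : ℂ) * u) + auxB s k u)
      (-(((s + k)/2 : ℝ) : ℂ) + -(((s + k)/2 : ℝ) : ℂ)) 0 := by
    have h1 : HasDerivAt (fun u : ℂ => 1 - (((s + k)/2 : ℝ) : ℂ) * u)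
        (-(((s + k)/2 : ℝ) : ℂ)) 0 := by
      simpa using ((hasDerivAt_id (0 : ℂ)).const_mul ((((s + k)/2 : ℝ)) : ℂ)).const_sub 1
    exact h1.add (hasDerivAt_auxB s k)
  have hg0 : ((1 : ℂ) - (((s + k)/2 : ℝ) : ℂ) * 0) + auxB s k 0 = 2 := by
    rw [auxB_zero]; ring
  have hd := hf.div hg (by rw [hg0]; norm_num)
  have : auxR s k = fun u : ℂ => (((s - k)/2 : ℝ) : ℂ) * (1 - (s : ℂ) * u) /
      ((1 - (((s + k)/2 : ℝ) : ℂ) * u) + auxB s k u) := rfl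
  rw [this]
  refine hd.congr_deriv ?_
  rw [hg0]
  push_cast
  ring

lemma auxG_zero (a s k : ℝ) (h : k < s) :
    auxG a s k 0 = (((((s - k)/4) ^ (a/2) : ℝ)) : ℂ) := by
  unfold auxG
  rw [auxR_zero, Complex.ofReal_cpow (by linarith : (0:ℝ) ≤ (s - k)/4)]
  push_cast
  ring_nf

lemma hasDerivAt_auxG (a s k : ℝ) (h : k < s) :
    HasDerivAt (auxG a s k)
      (-((((((s - k)/4) ^ (a/2) : ℝ)) : ℂ) * a * (((s - k) : ℝ) : ℂ))/4) 0 := by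
  have hδ : (0 : ℝ) < s - k := sub_pos.2 h
  have hR0 : auxR s k 0 = (((s - k)/4 : ℝ) : ℂ) := auxR_zero s k
  have hmem : auxR s k 0 ∈ Complex.slitPlane := by
    rw [hR0]
    exact Complex.ofReal_mem_slitPlane.2 (by linarith)
  have hd := (hasDerivAt_auxR s k).cpow_const (c := (a : ℂ)/2) hmem
  have : auxG a s k = fun u => auxR s k u ^ ((a : ℂ)/2) := rfl
  rw [this]
  convert hd using 1
  rw [hR0]
  have hb0 : (((s - k)/4 : ℝ) : ℂ) ≠ 0 := Complex.ofReal_ne_zero.mpr (by linarith)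
  rw [Complex.cpow_sub _ _ hb0, Complex.cpow_one]
  have hcast : ((((s - k)/4 : ℝ)) : ℂ) ^ ((a : ℂ)/2)
      = (((((s - k)/4) ^ (a/2) : ℝ)) : ℂ) := by
    rw [show ((a : ℂ))/2 = ((a/2 : ℝ) : ℂ) by push_cast; ring,
      ← Complex.ofReal_cpow (by linarith : (0:ℝ) ≤ (s - k)/4)]
  rw [hcast]
  have hreal : -((((s - k)/4)^(a/2)) * a * (s - k))/4
      = a/2 * ((((s - k)/4)^(a/2)) / ((s - k)/4)) * (-(s - k)^2/8) := by
    field_simp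
    ring
  exact_mod_cast congrArg (fun x : ℝ => (x : ℂ)) hreal

lemma tendsto_glue {f : ℂ → ℂ} {L d : ℂ} (hf : HasDerivAt f d 0) (hfv : f 0 = L)
    {g : ℂ → ℂ} (hg : ∀ᶠ z in cocompact ℂ, g z = f (1/z)) :
    Tendsto g (cocompact ℂ) (𝓝 L) ∧
      Tendsto (fun z => z * (g z - L)) (cocompact ℂ) (𝓝 d) := by
  have hinv : Tendsto (fun z : ℂ => 1/z) (cocompact ℂ) (𝓝[≠] (0 : ℂ)) := by
    rw [← Metric.cobounded_eq_cocompact]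
    simpa [one_div] using tendsto_inv₀_cobounded' (α := ℂ)
  have hne : ∀ᶠ z : ℂ in cocompact ℂ, z ≠ 0 := by
    have h1 := hinv self_mem_nhdsWithin
    filter_upwards [h1] with z hz
    intro h0
    rw [h0] at hz
    simp at hz
  constructor
  · have h1 : Tendsto (fun z : ℂ => f (1/z)) (cocompact ℂ) (𝓝 L) := by
      rw [← hfv]
      exact (hf.continuousAt.tendsto.mono_left nhdsWithin_le_nhds).comp hinv
    exact h1.congr' (hg.mono fun z h => h.symm)
  · have hslope := hasDerivAt_iff_tendsto_slope.mp hf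
    have h2 : Tendsto (fun z : ℂ => slope f 0 (1/z)) (cocompact ℂ) (𝓝 d) :=
      hslope.comp hinv
    apply h2.congr'
    filter_upwards [hg, hne] with z hgz hz0
    rw [slope_def_field, hgz, hfv, sub_zero]
    field_simp

lemma Pmat_entries (α κ : ℝ) (z : ℂ) :
    Pmat α κ z =
      !![((chi α κ : ℝ) : ℂ) * ((nu κ z + (nu κ z)⁻¹)/2) * (szego α κ z)⁻¹,
         ((chi α κ : ℝ) : ℂ) * (-Complex.I * (nu κ z - (nu κ z)⁻¹)/2) * szego α κ z;
         (((chi α κ : ℝ) : ℂ))⁻¹ * (Complex.I * (nu κ z - (nu κ z)⁻¹)/2) * (szego α κ z)⁻¹,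
         (((chi α κ : ℝ) : ℂ))⁻¹ * ((nu κ z + (nu κ z)⁻¹)/2) * szego α κ z] := by
  unfold Pmat
  ext i j
  fin_cases i <;> fin_cases j <;>
    (simp [Matrix.mul_apply, Fin.sum_univ_two, Matrix.smul_apply]; try ring_nf) <;>
    tauto

/-- Normalization of the outer parametrix at infinity: entrywise,
`P(z) → I` and `z(P(z) - I) → P₁` as `|z| → ∞`, where
`P₁ = (1/4)(√2 - κ) diag(χ, χ⁻¹) [[α, i], [-i, -α]] diag(χ⁻¹, χ)`. -/
theorem outer_parametrix_normalization (α κ : ℝ) (hα : -1 < α)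
    (hκ : κ < Real.sqrt 2) :
    (∀ i j : Fin 2,
      Tendsto (fun z : ℂ => Pmat α κ z i j) (cocompact ℂ)
        (𝓝 ((1 : Matrix (Fin 2) (Fin 2) ℂ) i j))) ∧
    (∀ i j : Fin 2,
      Tendsto (fun z : ℂ => z * (Pmat α κ z - 1) i j) (cocompact ℂ)
        (𝓝 ((((1 / 4 : ℂ) * (((Real.sqrt 2 - κ) : ℝ) : ℂ)) •
          (!![((chi α κ : ℝ) : ℂ), 0; 0, (((chi α κ : ℝ) : ℂ))⁻¹] *
            !![(α : ℂ), Complex.I; -Complex.I, -(α : ℂ)] *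
            !![(((chi α κ : ℝ) : ℂ))⁻¹, 0; 0, ((chi α κ : ℝ) : ℂ)])) i j))) := by
  have hδ : (0 : ℝ) < Real.sqrt 2 - κ := sub_pos.2 hκ
  set χc : ℂ := ((chi α κ : ℝ) : ℂ) with hχcdef
  set δc : ℂ := (((Real.sqrt 2 - κ) : ℝ) : ℂ) with hδcdef
  have hδc0 : δc ≠ 0 := Complex.ofReal_ne_zero.mpr hδ.ne'
  have hχpos : 0 < chi α κ := Real.rpow_pos_of_pos (by linarith) _
  have hχ0 : χc ≠ 0 := Complex.ofReal_ne_zero.mpr hχpos.ne'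
  set N : ℂ → ℂ := auxN (Real.sqrt 2) κ with hNdef
  set G : ℂ → ℂ := auxG α (Real.sqrt 2) κ with hGdef
  have hN : HasDerivAt N (-δc/4) 0 := hasDerivAt_auxN _ _
  have hN0 : N 0 = 1 := auxN_zero _ _
  have hG : HasDerivAt G (-(χc * (α : ℂ) * δc)/4) 0 := hasDerivAt_auxG α _ κ hκ
  have hG0 : G 0 = χc := auxG_zero α _ κ hκ
  have hNinv : HasDerivAt (fun u => (N u)⁻¹) (δc/4) 0 := by
    have := hN.inv (by rw [hN0]; exact one_ne_zero)
    refine this.congr_deriv ?_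
    rw [hN0]
    ring
  have hGinv : HasDerivAt (fun u => (G u)⁻¹) ((χc * (α : ℂ) * δc)/4 / χc^2) 0 := by
    have := hG.inv (by rw [hG0]; exact hχ0)
    refine this.congr_deriv ?_
    rw [hG0]
    ring
  have hC : HasDerivAt (fun u => (N u + (N u)⁻¹)/2) ((-δc/4 + δc/4)/2) 0 :=
    (hN.add hNinv).div_const 2
  have hD : HasDerivAt (fun u => (N u - (N u)⁻¹)/2) ((-δc/4 - δc/4)/2) 0 :=
    (hN.sub hNinv).div_const 2
  -- the eventual identification
  have hev : ∀ᶠ z : ℂ in cocompact ℂ, nu κ z = N (1/z) ∧ szego α κ z = G (1/z) := by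
    have hnorm : Tendsto (fun z : ℂ => ‖z‖) (cocompact ℂ) atTop :=
      tendsto_norm_cocompact_atTop
    filter_upwards [hnorm.eventually (eventually_gt_atTop (4*(Real.sqrt 2 + |κ| + 1)))]
      with z hz
    have hz' : 4*(Real.sqrt 2 + |κ| + 1) < ‖z‖ := hz
    exact ⟨nu_eq κ z hz', szego_eq α κ hκ z hz'⟩
  -- entry (0,0)
  have h00 : HasDerivAt (fun u => χc * ((N u + (N u)⁻¹)/2) * (G u)⁻¹)
      ((α : ℂ) * δc/4) 0 := by
    have h2 := (hC.const_mul χc).mul hGinv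
    refine h2.congr_deriv ?_
    beta_reduce
    rw [hN0, hG0]
    field_simp
    ring
  have v00 : (fun u => χc * ((N u + (N u)⁻¹)/2) * (G u)⁻¹) 0 = 1 := by
    show χc * ((N 0 + (N 0)⁻¹)/2) * (G 0)⁻¹ = 1
    rw [hN0, hG0]
    field_simp; norm_num
  have ev00 : ∀ᶠ z : ℂ in cocompact ℂ,
      Pmat α κ z 0 0 = (fun u => χc * ((N u + (N u)⁻¹)/2) * (G u)⁻¹) (1/z) := by
    filter_upwards [hev] with z hz
    rw [Pmat_entries, hz.1, hz.2]
    simp [hχcdef]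
  have key00 := tendsto_glue h00 v00 ev00
  -- entry (0,1)
  have h01 : HasDerivAt (fun u => χc * (-Complex.I * (N u - (N u)⁻¹)/2) * G u)
      (Complex.I * δc * χc^2/4) 0 := by
    have h1 := ((hN.sub hNinv).const_mul (-Complex.I)).div_const 2
    have h2 := (h1.const_mul χc).mul hG
    refine h2.congr_deriv ?_
    beta_reduce
    simp only [Pi.sub_apply]; rw [hN0, hG0]
    field_simp
    ring
  have v01 : (fun u => χc * (-Complex.I * (N u - (N u)⁻¹)/2) * G u) 0 = 0 := by
    show χc * (-Complex.I * (N 0 - (N 0)⁻¹)/2) * G 0 = 0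
    rw [hN0, hG0]
    norm_num
  have ev01 : ∀ᶠ z : ℂ in cocompact ℂ,
      Pmat α κ z 0 1 = (fun u => χc * (-Complex.I * (N u - (N u)⁻¹)/2) * G u) (1/z) := by
    filter_upwards [hev] with z hz
    rw [Pmat_entries, hz.1, hz.2]
    simp [hχcdef]
  have key01 := tendsto_glue h01 v01 ev01
  -- entry (1,0)
  have h10 : HasDerivAt (fun u => χc⁻¹ * (Complex.I * (N u - (N u)⁻¹)/2) * (G u)⁻¹)
      (-Complex.I * δc * (χc⁻¹)^2/4) 0 := by
    have h1 := ((hN.sub hNinv).const_mul Complex.I).div_const 2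
    have h2 := (h1.const_mul χc⁻¹).mul hGinv
    refine h2.congr_deriv ?_
    beta_reduce
    simp only [Pi.sub_apply]; rw [hN0, hG0]
    field_simp
    ring
  have v10 : (fun u => χc⁻¹ * (Complex.I * (N u - (N u)⁻¹)/2) * (G u)⁻¹) 0 = 0 := by
    show χc⁻¹ * (Complex.I * (N 0 - (N 0)⁻¹)/2) * (G 0)⁻¹ = 0
    rw [hN0, hG0]
    norm_num
  have ev10 : ∀ᶠ z : ℂ in cocompact ℂ,
      Pmat α κ z 1 0 = (fun u => χc⁻¹ * (Complex.I * (N u - (N u)⁻¹)/2) * (G u)⁻¹) (1/z) := by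
    filter_upwards [hev] with z hz
    rw [Pmat_entries, hz.1, hz.2]
    simp [hχcdef]
  have key10 := tendsto_glue h10 v10 ev10
  -- entry (1,1)
  have h11 : HasDerivAt (fun u => χc⁻¹ * ((N u + (N u)⁻¹)/2) * G u)
      (-(α : ℂ) * δc/4) 0 := by
    have h2 := (hC.const_mul χc⁻¹).mul hG
    refine h2.congr_deriv ?_
    beta_reduce
    rw [hN0, hG0]
    field_simp
    ring
  have v11 : (fun u => χc⁻¹ * ((N u + (N u)⁻¹)/2) * G u) 0 = 1 := by
    show χc⁻¹ * ((N 0 + (N 0)⁻¹)/2) * G 0 = 1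
    rw [hN0, hG0]
    field_simp; norm_num
  have ev11 : ∀ᶠ z : ℂ in cocompact ℂ,
      Pmat α κ z 1 1 = (fun u => χc⁻¹ * ((N u + (N u)⁻¹)/2) * G u) (1/z) := by
    filter_upwards [hev] with z hz
    rw [Pmat_entries, hz.1, hz.2]
    simp [hχcdef]
  have key11 := tendsto_glue h11 v11 ev11
  constructor
  · intro i j
    fin_cases i <;> fin_cases j
    · simpa using key00.1
    · simpa using key01.1
    · simpa using key10.1
    · simpa using key11.1
  · intro i j
    fin_cases i <;> fin_cases j
    · convert key00.2 using 2
      all_goals simp [Matrix.mul_apply, Fin.sum_univ_two, Matrix.smul_apply]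
      field_simp
    · convert key01.2 using 2
      all_goals simp [Matrix.mul_apply, Fin.sum_univ_two, Matrix.smul_apply]
      field_simp
    · convert key10.2 using 2
      all_goals simp [Matrix.mul_apply, Fin.sum_univ_two, Matrix.smul_apply]
      field_simp
    · convert key11.2 using 2
      all_goals simp [Matrix.mul_apply, Fin.sum_univ_two, Matrix.smul_apply]
      field_simp
end
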